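/- Let X be a metric subspace of the unit sphere S of a real Hilbert space H. Then every surjective isometry of X extends uniquely to an orthogonal (linear isometric) transformation of the closed linear span of X in H; in particular, for x, y ∈ S, the inner product satisfies ⟨x, y⟩ = 1 − (1/2)·d(x,y)², where d is the norm distance. -/

import Mathlib

section Helpers
variable {H : Type*} [NormedAddCommGroup H] [InnerProductSpace ℝ H]

lemma sphere_inner_formula (x y : H) (hx : x ∈ Metric.sphere (0:H) 1)
    (hy : y ∈ Metric.sphere (0:H) 1) : (inner ℝ x y : ℝ) = 1 - dist x y ^ 2 / 2 := by
  rw [mem_sphere_zero_iff_norm] at hx hy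
  have h := @norm_sub_sq_real H _ _ x y
  rw [dist_eq_norm]
  nlinarith [h]

lemma lincomb_norm_eq {X : Type*} (v w : X → H)
    (h : ∀ i j, (inner ℝ (v i) (v j) : ℝ) = inner ℝ (w i) (w j)) (l : X →₀ ℝ) :
    ‖Finsupp.linearCombination ℝ v l‖ = ‖Finsupp.linearCombination ℝ w l‖ := by
  have key : (inner ℝ (Finsupp.linearCombination ℝ v l) (Finsupp.linearCombination ℝ v l) : ℝ)
      = inner ℝ (Finsupp.linearCombination ℝ w l) (Finsupp.linearCombination ℝ w l) := by
    rw [Finsupp.linearCombination_apply, Finsupp.sum, Finsupp.linearCombination_apply, Finsupp.sum]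
    simp only [sum_inner, inner_sum, real_inner_smul_left, real_inner_smul_right, h]
  have := real_inner_self_eq_norm_sq (Finsupp.linearCombination ℝ v l)
  have := real_inner_self_eq_norm_sq (Finsupp.linearCombination ℝ w l)
  nlinarith [norm_nonneg (Finsupp.linearCombination ℝ v l),
    norm_nonneg (Finsupp.linearCombination ℝ w l)]

variable {X : Type*} (v w : X → H)
    (h : ∀ l : X →₀ ℝ, ‖Finsupp.linearCombination ℝ v l‖ = ‖Finsupp.linearCombination ℝ w l‖)

noncomputable def spanMap : Submodule.span ℝ (Set.range v) →ₗ[ℝ] H :=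
  ((Submodule.liftQ (LinearMap.ker (Finsupp.linearCombination ℝ v))
      (Finsupp.linearCombination ℝ w)
      (fun l hl => by
        simp only [LinearMap.mem_ker] at hl ⊢
        have := h l
        rw [hl, norm_zero] at this
        exact (norm_eq_zero.mp this.symm))) ∘ₗ
    ((Finsupp.linearCombination ℝ v).quotKerEquivRange.symm.toLinearMap)) ∘ₗ
    (LinearEquiv.ofEq _ _ (Finsupp.range_linearCombination ℝ (v := v)).symm).toLinearMap

lemma spanMap_apply (l : X →₀ ℝ)
    (hm : Finsupp.linearCombination ℝ v l ∈ Submodule.span ℝ (Set.range v)) :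
    spanMap v w h ⟨_, hm⟩ = Finsupp.linearCombination ℝ w l := by
  unfold spanMap
  simp only [LinearMap.comp_apply, LinearEquiv.coe_coe]
  have h2 : ((LinearEquiv.ofEq _ _ (Finsupp.range_linearCombination ℝ (v := v)).symm)
      ⟨_, hm⟩ : LinearMap.range (Finsupp.linearCombination ℝ v))
      = ⟨Finsupp.linearCombination ℝ v l, LinearMap.mem_range_self _ l⟩ := rfl
  rw [h2, LinearMap.quotKerEquivRange_symm_apply_image]
  rfl

lemma spanMap_repr (u : Submodule.span ℝ (Set.range v)) :
    ∃ l : X →₀ ℝ, Finsupp.linearCombination ℝ v l = (u : H) ∧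
      spanMap v w h u = Finsupp.linearCombination ℝ w l := by
  have hu : (u : H) ∈ LinearMap.range (Finsupp.linearCombination ℝ v) := by
    rw [Finsupp.range_linearCombination]; exact u.2
  obtain ⟨l, hl⟩ := hu
  have hm : Finsupp.linearCombination ℝ v l ∈ Submodule.span ℝ (Set.range v) := hl ▸ u.2
  have he : u = ⟨_, hm⟩ := Subtype.ext hl.symm
  exact ⟨l, hl, by rw [he, spanMap_apply v w h l hm]⟩

lemma spanMap_norm (u : Submodule.span ℝ (Set.range v)) :
    ‖spanMap v w h u‖ = ‖u‖ := by
  obtain ⟨l, hl, hs⟩ := spanMap_repr v w h u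
  rw [hs, ← h l]
  simp [Submodule.norm_coe, ← hl]

lemma spanMap_mem (u : Submodule.span ℝ (Set.range v)) :
    spanMap v w h u ∈ Submodule.span ℝ (Set.range w) := by
  obtain ⟨l, hl, hs⟩ := spanMap_repr v w h u
  rw [hs, ← Finsupp.range_linearCombination]
  exact LinearMap.mem_range_self _ l

end Helpers

theorem sphere_subspace_isometry_extends
    {H : Type*} [NormedAddCommGroup H] [InnerProductSpace ℝ H] [CompleteSpace H]
    (X : Set H) (hX : X ⊆ Metric.sphere (0 : H) 1)
    (φ : X → X) (hbij : Function.Bijective φ) (hiso : Isometry φ) :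
    (∀ x y : H, x ∈ Metric.sphere (0 : H) 1 → y ∈ Metric.sphere (0 : H) 1 →
      (inner ℝ x y : ℝ) = 1 - dist x y ^ 2 / 2) ∧
    ∃! T : (Submodule.span ℝ X).topologicalClosure ≃ₗᵢ[ℝ]
            (Submodule.span ℝ X).topologicalClosure,
      ∀ (x : H) (hx : x ∈ X),
        (T ⟨x, Submodule.le_topologicalClosure _ (Submodule.subset_span hx)⟩ : H)
          = (φ ⟨x, hx⟩ : H) := by
  classical
  refine ⟨fun x y hx hy => sphere_inner_formula x y hx hy, ?_⟩
  set K := Submodule.span ℝ X with hK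
  set C := K.topologicalClosure with hC
  haveI : CompleteSpace C := K.isClosed_topologicalClosure.completeSpace_coe
  set v : X → H := fun x => (x : H) with hv
  set w : X → H := fun x => (φ x : H) with hw
  have hrv : Set.range v = X := Subtype.range_coe
  have hrwX : Set.range w ⊆ X := by rintro _ ⟨i, rfl⟩; exact (φ i).2
  -- φ preserves inner products
  have hvw : ∀ i j, (inner ℝ (v i) (v j) : ℝ) = inner ℝ (w i) (w j) := by
    intro i j
    rw [sphere_inner_formula (v i) (v j) (hX i.2) (hX j.2),
      sphere_inner_formula (w i) (w j) (hX (φ i).2) (hX (φ j).2)]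
    have : dist (w i) (w j) = dist (v i) (v j) := by
      have := hiso.dist_eq i j
      rwa [Subtype.dist_eq, Subtype.dist_eq] at this
    rw [this]
  have hnorm := lincomb_norm_eq v w hvw
  -- the linear isometry on the span
  have hKr : K = Submodule.span ℝ (Set.range v) := by rw [hrv]
  set E : K ≃ₗ[ℝ] Submodule.span ℝ (Set.range v) := LinearEquiv.ofEq _ _ hKr
  set Lsp : K →ₗ[ℝ] H := (spanMap v w hnorm) ∘ₗ E.toLinearMap with hLsp
  have hLnorm : ∀ k : K, ‖Lsp k‖ = ‖k‖ := fun k => spanMap_norm v w hnorm (E k)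
  have hLmem : ∀ k : K, Lsp k ∈ K := by
    intro k
    have := spanMap_mem v w hnorm (E k)
    exact Submodule.span_mono hrwX this
  have hLval : ∀ (x : H) (hx : x ∈ X),
      Lsp ⟨x, Submodule.subset_span hx⟩ = (φ ⟨x, hx⟩ : H) := by
    intro x hx
    have hm : Finsupp.linearCombination ℝ v (Finsupp.single ⟨x, hx⟩ 1)
        ∈ Submodule.span ℝ (Set.range v) := by
      apply Submodule.subset_span
      simp [Finsupp.linearCombination_single]
    have hE : E ⟨x, Submodule.subset_span hx⟩
        = ⟨Finsupp.linearCombination ℝ v (Finsupp.single ⟨x, hx⟩ 1), hm⟩ := by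
      apply Subtype.ext
      simp [Finsupp.linearCombination_single, E, hv]
    rw [hLsp]
    simp only [LinearMap.comp_apply, LinearEquiv.coe_coe]
    rw [hE, spanMap_apply]
    simp [Finsupp.linearCombination_single, hw]
  -- inclusion and codomain-restricted maps as linear isometries
  set e : K →ₗᵢ[ℝ] C :=
    ⟨Submodule.inclusion (Submodule.le_topologicalClosure K), fun k => rfl⟩ with he
  set Lc : K →ₗᵢ[ℝ] C :=
    ⟨Lsp.codRestrict (C : Submodule ℝ H)
        (fun k => Submodule.le_topologicalClosure K (hLmem k)),
      fun k => hLnorm k⟩ with hLc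
  have hdense : DenseRange (e : K → C) := by
    intro c
    have hc : (c : H) ∈ closure (K : Set H) := by
      have := c.2
      rwa [← Submodule.topologicalClosure_coe]
    have hrange : Set.range (e : K → C) = {d : C | (d : H) ∈ K} := by
      ext d
      constructor
      · rintro ⟨k, rfl⟩; exact k.2
      · intro hd; exact ⟨⟨d, hd⟩, rfl⟩
    rw [hrange, closure_subtype]
    have himg : Subtype.val '' {d : C | (d : H) ∈ K} = (K : Set H) := by
      ext a
      constructor
      · rintro ⟨d, hd, rfl⟩; exact hd
      · intro ha; exact ⟨⟨a, Submodule.le_topologicalClosure K ha⟩, ha, rfl⟩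
    rwa [himg]
  have hui : IsUniformInducing (e : K → C) := e.isometry.isUniformInducing
  -- extend to the closure
  set T₁ : C →L[ℝ] C := Lc.toContinuousLinearMap.extend e.toContinuousLinearMap
    with hT₁
  have hT₁e : ∀ k : K, T₁ (e k) = Lc k := fun k =>
    ContinuousLinearMap.extend_eq _ hdense hui k
  have hT₁norm : ∀ c : C, ‖T₁ c‖ = ‖c‖ := by
    intro c
    refine hdense.induction_on c (isClosed_eq T₁.continuous.norm continuous_norm) fun k => ?_
    rw [hT₁e k, Lc.norm_map, e.norm_map]
  set T₁ₗᵢ : C →ₗᵢ[ℝ] C := ⟨(T₁ : C →ₗ[ℝ] C), hT₁norm⟩ with hT₁l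
  -- surjectivity of T₁
  set L' : K →ₗ[ℝ] K := Lsp.codRestrict K hLmem with hL'
  have hL'surj : Function.Surjective L' := by
    rw [← LinearMap.range_eq_top, ← top_le_iff, ← Submodule.span_span_coe_preimage (s := X)]
    rw [Submodule.span_le]
    rintro k (hk : (k : H) ∈ X)
    obtain ⟨y, hy⟩ := hbij.2 ⟨(k : H), hk⟩
    refine ⟨⟨(y : H), Submodule.subset_span y.2⟩, ?_⟩
    apply Subtype.ext
    show Lsp _ = (k : H)
    rw [hLval y y.2]
    rw [Subtype.ext_iff] at hy
    simpa using hy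
  have hT₁surj : Function.Surjective (T₁ : C → C) := by
    have hclosed : IsClosed (Set.range (T₁ : C → C)) := by
      have hisoT : Isometry (T₁ : C → C) := T₁ₗᵢ.isometry
      exact hisoT.isClosedEmbedding.isClosed_range
    have hsub : Set.range (e : K → C) ⊆ Set.range (T₁ : C → C) := by
      rintro _ ⟨k, rfl⟩
      obtain ⟨k', hk'⟩ := hL'surj k
      refine ⟨e k', ?_⟩
      rw [hT₁e k']
      apply Subtype.ext
      show Lsp k' = (k : H)
      have := congrArg (Subtype.val) hk'
      exact this
    have : closure (Set.range (e : K → C)) ⊆ Set.range (T₁ : C → C) :=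
      hclosed.closure_subset_iff.mpr hsub
    rw [hdense.closure_range] at this
    exact fun c => this (Set.mem_univ c)
  set T : C ≃ₗᵢ[ℝ] C := LinearIsometryEquiv.ofSurjective T₁ₗᵢ hT₁surj with hT
  have hTcoe : ∀ c : C, T c = T₁ c := fun c => rfl
  have hTprop : ∀ (x : H) (hx : x ∈ X),
      (T ⟨x, Submodule.le_topologicalClosure _ (Submodule.subset_span hx)⟩ : H)
        = (φ ⟨x, hx⟩ : H) := by
    intro x hx
    have hx' : (⟨x, Submodule.le_topologicalClosure _ (Submodule.subset_span hx)⟩ : C)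
        = e ⟨x, Submodule.subset_span hx⟩ := rfl
    rw [hTcoe, hx', hT₁e]
    show Lsp _ = _
    exact hLval x hx
  refine ⟨T, hTprop, ?_⟩
  -- uniqueness
  intro T' hT'
  have hagree : ∀ c : C, (T' c : H) = (T c : H) := by
    have hsclosed : IsClosed {c : C | (T' c : H) = (T c : H)} := by
      apply isClosed_eq
      · exact continuous_subtype_val.comp T'.continuous
      · exact continuous_subtype_val.comp T.continuous
    have hspan : (Submodule.span ℝ (Subtype.val ⁻¹' X : Set C) : Set C)
        ⊆ {c : C | (T' c : H) = (T c : H)} := by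
      intro c hc
      induction hc using Submodule.span_induction with
      | mem c hc =>
        have hcx : (c : H) ∈ X := hc
        have hceq : c = ⟨(c : H),
            Submodule.le_topologicalClosure _ (Submodule.subset_span hcx)⟩ :=
          Subtype.ext rfl
        show (T' c : H) = (T c : H)
        rw [hceq, hT' _ hcx, hTprop _ hcx]
      | zero => simp
      | add a b _ _ ha hb =>
        show (T' (a + b) : H) = (T (a + b) : H)
        rw [map_add, map_add, Submodule.coe_add, Submodule.coe_add, ha, hb]
      | smul r a _ ha =>
        show (T' (r • a) : H) = (T (r • a) : H)
        rw [map_smul, map_smul, Submodule.coe_smul, Submodule.coe_smul, ha]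
    have hdense2 : ∀ c : C, c ∈ closure (Submodule.span ℝ (Subtype.val ⁻¹' X : Set C) : Set C) := by
      intro c
      rw [closure_subtype]
      have himg : Subtype.val '' (Submodule.span ℝ (Subtype.val ⁻¹' X : Set C) : Set C)
          = (K : Set H) := by
        have h1 : Submodule.map C.subtype (Submodule.span ℝ (Subtype.val ⁻¹' X : Set C))
            = Submodule.span ℝ (Subtype.val '' (Subtype.val ⁻¹' X : Set C)) := by
          rw [Submodule.map_span]; rfl
        have h2 : Subtype.val '' (Subtype.val ⁻¹' X : Set C) = X := by
          rw [Set.image_preimage_eq_inter_range, Subtype.range_coe]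
          exact Set.inter_eq_left.mpr fun x hx =>
            Submodule.le_topologicalClosure K (Submodule.subset_span hx)
        calc Subtype.val '' (Submodule.span ℝ (Subtype.val ⁻¹' X : Set C) : Set C)
            = (Submodule.map C.subtype (Submodule.span ℝ (Subtype.val ⁻¹' X : Set C)) : Set H) := by
              simp [Submodule.map_coe]
          _ = (K : Set H) := by rw [h1, h2]
      rw [himg]
      have := c.2
      rwa [← Submodule.topologicalClosure_coe]
    intro c
    exact hsclosed.closure_subset_iff.mpr hspan (hdense2 c)
  ext c
  exact hagree c
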